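/- Let f, g ∈ ℚ[t] be polynomials with deg f = 2 and deg g = 2. Then f·g divides f³ + g³ + 8 in ℚ[t] if and only if either g = −f − 2, or there exists a polynomial h ∈ ℚ[t] of degree 1 such that f = h² − h + 1 and g = h² + h + 1. -/

import Mathlib

open Polynomial

private lemma rat_cube_eq_neg_one {ν : ℚ} (h : ν ^ 3 = -1) : ν = -1 := by
  have h2 : (ν + 1) * (ν ^ 2 - ν + 1) = 0 := by linear_combination h
  rcases mul_eq_zero.mp h2 with h3 | h3
  · linarith
  · nlinarith [sq_nonneg (2 * ν - 1)]

private lemma no_lin_dvd (s b : ℚ[X]) (hb : b.natDegree = 1)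
    (hdvd : b ∣ s ^ 2 - 2 * s + 4) : False := by
  have hb0 : b ≠ 0 := fun h => by simp [h] at hb
  have hb1 : b.coeff 1 ≠ 0 := by
    have := coeff_natDegree (p := b)
    rw [hb] at this
    rw [this]
    exact leadingCoeff_ne_zero.mpr hb0
  set r : ℚ := -(b.coeff 0) / b.coeff 1 with hr
  have hroot : b.eval r = 0 := by
    have hbe := eq_X_add_C_of_natDegree_le_one (hb.le)
    rw [hbe]
    have : b.coeff 1 * r + b.coeff 0 = 0 := by
      rw [hr]; field_simp; ring
    simpa using this
  obtain ⟨w, hw⟩ := hdvd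
  have h0 : (s ^ 2 - 2 * s + 4).eval r = 0 := by rw [hw]; simp [hroot]
  simp only [eval_add, eval_sub, eval_pow, eval_mul, eval_ofNat] at h0
  nlinarith [sq_nonneg (s.eval r - 1), h0]

private lemma key_dvd (f g : ℚ[X]) (hf : f.natDegree = 2) (hg : g.natDegree = 2)
    (hd : f * g ∣ f ^ 3 + g ^ 3 + 8) (hs : (f + g).natDegree = 2) :
    f ∣ (f + g) ^ 2 - 2 * (f + g) + 4 := by
  have hf0 : f ≠ 0 := fun h => by simp [h] at hf
  have hg0 : g ≠ 0 := fun h => by simp [h] at hg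
  have hAB : f ∣ (f + g + 2) * ((f + g) ^ 2 - 2 * (f + g) + 4) := by
    have h1 : f ∣ (f + g) ^ 3 + 8 := by
      have he : (f + g) ^ 3 + 8 = (f ^ 3 + g ^ 3 + 8) + (f * g) * (3 * (f + g)) := by ring
      rw [he]
      exact dvd_add ((dvd_mul_right f g).trans hd) ((dvd_mul_right f g).mul_right _)
    have he2 : (f + g) ^ 3 + 8 = (f + g + 2) * ((f + g) ^ 2 - 2 * (f + g) + 4) := by ring
    rwa [he2] at h1
  obtain ⟨a, b, ha, hb, hab⟩ := exists_dvd_and_dvd_of_dvd_mul hAB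
  have ha0 : a ≠ 0 := fun h => hf0 (by simp [hab, h])
  have hb0 : b ≠ 0 := fun h => hf0 (by simp [hab, h])
  have hdeg : a.natDegree + b.natDegree = 2 := by
    rw [← natDegree_mul ha0 hb0, ← hab, hf]
  have hAdeg : (f + g + 2).natDegree = 2 := by
    rw [show f + g + (2 : ℚ[X]) = (f + g) + C 2 by rw [map_ofNat], natDegree_add_C, hs]
  have hA0 : f + g + 2 ≠ 0 := fun h => by simp [h] at hAdeg
  have hcases : b.natDegree = 0 ∨ b.natDegree = 1 ∨ b.natDegree = 2 := by omega
  rcases hcases with hbd | hbd | hbd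
  · -- b constant, a has degree 2, a ∣ f+g+2 : leads to contradiction
    exfalso
    have had : a.natDegree = 2 := by omega
    obtain ⟨k, hk⟩ : ∃ k, b = C k := ⟨b.coeff 0, eq_C_of_natDegree_eq_zero hbd⟩
    have hk0 : k ≠ 0 := fun h => hb0 (by simp [hk, h])
    obtain ⟨w, hw⟩ := ha
    have hw0 : w ≠ 0 := fun h => hA0 (by simp [hw, h])
    have hwd : w.natDegree = 0 := by
      have := natDegree_mul ha0 hw0
      rw [← hw, hAdeg, had] at this
      omega
    obtain ⟨μ, hμ⟩ : ∃ μ, w = C μ := ⟨w.coeff 0, eq_C_of_natDegree_eq_zero hwd⟩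
    have hμ0 : μ ≠ 0 := fun h => hw0 (by simp [hμ, h])
    -- C k * (f + g + 2) = C μ * f
    have hA : C k * (f + g + 2) = C μ * f := by
      rw [hw, hab, hk, hμ]; ring
    set ν : ℚ := μ - k with hν
    have hA2 : C k * (g + 2) = C ν * f := by
      rw [hν, C_sub]; linear_combination hA
    -- g ∣ f^3 + 8
    have hg3 : g ∣ f ^ 3 + 8 := by
      have hgd : g ∣ f ^ 3 + g ^ 3 + 8 := (dvd_mul_left g f).trans hd
      have : f ^ 3 + 8 = (f ^ 3 + g ^ 3 + 8) - g * g ^ 2 := by ring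
      rw [this]
      exact dvd_sub hgd (dvd_mul_right g (g ^ 2))
    have hkey : C ν ^ 3 * (f ^ 3 + 8) =
        C k ^ 3 * (g * (g ^ 2 + 6 * g + 12)) + (C k ^ 3 * 8 + C ν ^ 3 * 8) := by
      linear_combination (-((C ν * f) ^ 2) - (C ν * f) * (C k * (g + 2)) - (C k * (g + 2)) ^ 2) * hA2
    have hgC : g ∣ C (8 * k ^ 3 + 8 * ν ^ 3) := by
      have hCC : (C (8 * k ^ 3 + 8 * ν ^ 3) : ℚ[X]) = C k ^ 3 * 8 + C ν ^ 3 * 8 := by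
        rw [C_add, C_mul, C_mul, ← C_pow, ← C_pow]
        simp only [map_ofNat]
        ring
      rw [hCC]
      have h1 : g ∣ C ν ^ 3 * (f ^ 3 + 8) := hg3.mul_left _
      have h2 : g ∣ C k ^ 3 * (g * (g ^ 2 + 6 * g + 12)) :=
        ((dvd_mul_right g _)).mul_left _
      have := dvd_sub h1 h2
      rwa [hkey, add_sub_cancel_left] at this
    have hzero : 8 * k ^ 3 + 8 * ν ^ 3 = 0 := by
      by_contra hne
      have hu : IsUnit (C (8 * k ^ 3 + 8 * ν ^ 3) : ℚ[X]) :=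
        isUnit_C.mpr (isUnit_iff_ne_zero.mpr hne)
      have := natDegree_eq_zero_of_isUnit (isUnit_of_dvd_unit hgC hu)
      omega
    have hνk : ν = -k := by
      have h1 : (ν / k) ^ 3 = -1 := by
        field_simp
        linarith
      have := rat_cube_eq_neg_one h1
      field_simp at this
      linarith
    exact hμ0 (by rw [hν] at hνk; linarith)
  · exact absurd hb (fun h => no_lin_dvd (f + g) b hbd h)
  · -- a constant, b deg 2, b ∣ B, so f ∣ B
    have had : a.natDegree = 0 := by omega
    obtain ⟨k, hk⟩ : ∃ k, a = C k := ⟨a.coeff 0, eq_C_of_natDegree_eq_zero had⟩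
    have hk0 : k ≠ 0 := fun h => ha0 (by simp [hk, h])
    obtain ⟨w, hw⟩ := hb
    refine ⟨C k⁻¹ * w, ?_⟩
    rw [hw, hab, hk]
    have hkk : (C k : ℚ[X]) * C k⁻¹ = 1 := by
      rw [← C_mul, mul_inv_cancel₀ hk0, C_1]
    linear_combination (-(b * w)) * hkk


private lemma ndeg_add_le {p q : ℚ[X]} {n : ℕ} (hp : p.natDegree ≤ n)
    (hq : q.natDegree ≤ n) : (p + q).natDegree ≤ n :=
  (natDegree_add_le p q).trans (max_le hp hq)

private lemma ndeg_sub_le {p q : ℚ[X]} {n : ℕ} (hp : p.natDegree ≤ n)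
    (hq : q.natDegree ≤ n) : (p - q).natDegree ≤ n :=
  (natDegree_sub_le p q).trans (max_le hp hq)


theorem cubic_congruence_eight_deg2_deg2 (f g : ℚ[X])
    (hf : f.natDegree = 2) (hg : g.natDegree = 2) :
    f * g ∣ f ^ 3 + g ^ 3 + 8 ↔
      g = -f - 2 ∨
        ∃ h : ℚ[X], h.natDegree = 1 ∧
          f = h ^ 2 - h + 1 ∧
          g = h ^ 2 + h + 1 := by
  constructor
  · intro hd
    have hf0 : f ≠ 0 := fun h => by simp [h] at hf
    have hg0 : g ≠ 0 := fun h => by simp [h] at hg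
    have hfg0 : f * g ≠ 0 := mul_ne_zero hf0 hg0
    have hfgdeg : (f * g).natDegree = 4 := by rw [natDegree_mul hf0 hg0, hf, hg]
    have hd8 : f * g ∣ (f + g) ^ 3 + 8 := by
      have he : (f + g) ^ 3 + 8 = (f ^ 3 + g ^ 3 + 8) + (f * g) * (3 * (f + g)) := by ring
      rw [he]
      exact dvd_add hd (Dvd.intro _ rfl)
    by_cases h0 : (f + g) ^ 3 + 8 = 0
    · left
      have hfact : (f + g + 2) * ((f + g) ^ 2 - 2 * (f + g) + 4) = 0 := by
        linear_combination h0
      rcases mul_eq_zero.mp hfact with h1 | h1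
      · linear_combination h1
      · exfalso
        have := congrArg (eval 0) h1
        simp only [eval_add, eval_sub, eval_pow, eval_mul, eval_ofNat, eval_zero] at this
        nlinarith [sq_nonneg ((f + g).eval 0 - 1), this]
    · right
      -- degree of f+g is 2
      have hs2 : (f + g).natDegree = 2 := by
        have hle : (f + g).natDegree ≤ 2 := by
          have := natDegree_add_le f g
          omega
        have hge : 4 ≤ 3 * (f + g).natDegree := by
          have h1 := natDegree_le_of_dvd hd8 h0
          have h2 : ((f + g) ^ 3 + 8).natDegree = 3 * (f + g).natDegree := by
            rw [show ((f+g) ^ 3 + (8:ℚ[X])) = (f+g) ^ 3 + C 8 by rw [map_ofNat],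
              natDegree_add_C, natDegree_pow]
          omega
        omega
      have hF : f ∣ (f + g) ^ 2 - 2 * (f + g) + 4 := key_dvd f g hf hg hd hs2
      have hG : g ∣ (f + g) ^ 2 - 2 * (f + g) + 4 := by
        have hd' : g * f ∣ g ^ 3 + f ^ 3 + 8 := by
          rw [mul_comm, show g ^ 3 + f ^ 3 + 8 = f ^ 3 + g ^ 3 + 8 by ring]
          exact hd
        have hs2' : (g + f).natDegree = 2 := by rwa [add_comm]
        have := key_dvd g f hg hf hd' hs2'
        rwa [add_comm g f] at this
      have hcop : IsCoprime f g := by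
        rw [← EuclideanDomain.gcd_isUnit_iff]
        have hdf : EuclideanDomain.gcd f g ∣ f := EuclideanDomain.gcd_dvd_left f g
        have hdg : EuclideanDomain.gcd f g ∣ g := EuclideanDomain.gcd_dvd_right f g
        have hfg3 : f ∣ g ^ 3 + 8 := by
          have h1 : f ∣ f ^ 3 + g ^ 3 + 8 := (dvd_mul_right f g).trans hd
          have h2 : g ^ 3 + 8 = (f ^ 3 + g ^ 3 + 8) - f * f ^ 2 := by ring
          rw [h2]; exact dvd_sub h1 (dvd_mul_right f (f ^ 2))
        have hd8' : EuclideanDomain.gcd f g ∣ (8 : ℚ[X]) := by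
          have h1 : EuclideanDomain.gcd f g ∣ g ^ 3 + 8 := hdf.trans hfg3
          have h2 : EuclideanDomain.gcd f g ∣ g ^ 3 := hdg.trans (dvd_pow_self g (by norm_num))
          have := dvd_sub h1 h2
          rwa [add_sub_cancel_left] at this
        have h8u : IsUnit (8 : ℚ[X]) := by
          rw [← map_ofNat (C : ℚ →+* ℚ[X]) 8]
          exact isUnit_C.mpr (isUnit_iff_ne_zero.mpr (by norm_num))
        exact isUnit_of_dvd_unit hd8' h8u
      have hBdvd : f * g ∣ (f + g) ^ 2 - 2 * (f + g) + 4 := hcop.mul_dvd hF hG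
      have hBdeg : ((f + g) ^ 2 - 2 * (f + g) + 4).natDegree = 4 := by
        rw [show (f + g) ^ 2 - 2 * (f + g) + 4 = (f + g) ^ 2 + (-(2 * (f + g)) + 4) by ring]
        rw [natDegree_add_eq_left_of_natDegree_lt]
        · rw [natDegree_pow, hs2]
        · rw [natDegree_pow, hs2]
          have h1 : (-(2 * (f + g)) + (4 : ℚ[X])).natDegree ≤ 2 := by
            apply ndeg_add_le
            · rw [natDegree_neg, show (2 : ℚ[X]) * (f + g) = C 2 * (f + g) by rw [map_ofNat]]
              exact le_trans (natDegree_C_mul_le _ _) (le_of_eq hs2)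
            · simp
          omega
      have hB0 : (f + g) ^ 2 - 2 * (f + g) + 4 ≠ 0 := fun h => by simp [h] at hBdeg
      obtain ⟨q, hq⟩ := hBdvd
      have hq0 : q ≠ 0 := fun h => hB0 (by rw [hq, h, mul_zero])
      have hqdeg : q.natDegree = 0 := by
        have := natDegree_mul hfg0 hq0
        rw [← hq, hBdeg, hfgdeg] at this
        omega
      obtain ⟨c, hc⟩ : ∃ c, q = C c := ⟨q.coeff 0, eq_C_of_natDegree_eq_zero hqdeg⟩
      have hc0 : c ≠ 0 := fun h => hq0 (by simp [hc, h])
      rw [hc] at hq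
      have hc4 : c = 4 := by
        by_contra hc4
        set e : ℚ[X] := 2 * f + (2 - C c) * g - 2 with he_def
        have he : e ^ 2 = C c * (C c - 4) * g ^ 2 + 4 * C c * g - 12 := by
          rw [he_def]
          linear_combination (4 : ℚ[X]) * hq
        have h2c : (2 : ℚ[X]) - C c = C (2 - c) := by rw [C_sub, map_ofNat]
        have hedeg : e.natDegree ≤ 2 := by
          rw [he_def]
          refine ndeg_sub_le (ndeg_add_le ?_ ?_) ?_
          · rw [show (2 : ℚ[X]) * f = C 2 * f by rw [map_ofNat]]
            exact (natDegree_C_mul_le _ _).trans hf.le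
          · rw [h2c]
            exact (natDegree_C_mul_le _ _).trans hg.le
          · simp
        have hgc2 : g.coeff 2 ≠ 0 := by
          have h1 := coeff_natDegree (p := g)
          rw [hg] at h1
          rw [h1]
          exact leadingCoeff_ne_zero.mpr hg0
        set δ : ℚ := e.coeff 2 / g.coeff 2 with hδ_def
        set r : ℚ[X] := e - C δ * g with hr_def
        have her : e = C δ * g + r := by rw [hr_def]; ring
        have hrc2 : r.coeff 2 = 0 := by
          rw [hr_def, coeff_sub, coeff_C_mul, hδ_def]
          field_simp
          ring
        have hrdeg : r.natDegree ≤ 1 := by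
          rw [natDegree_le_iff_coeff_eq_zero]
          intro N hN
          by_cases hN2 : N = 2
          · rw [hN2]; exact hrc2
          · have h3 : 3 ≤ N := by omega
            rw [hr_def, coeff_sub, coeff_C_mul,
              coeff_eq_zero_of_natDegree_lt (lt_of_le_of_lt hedeg (by omega)),
              coeff_eq_zero_of_natDegree_lt (lt_of_le_of_lt hg.le (by omega))]
            ring
        have hδsq : δ ^ 2 = c * (c - 4) := by
          by_contra hne
          have hCD : (C δ) ^ 2 - C c * (C c - 4) = C (δ ^ 2 - c * (c - 4)) := by
            rw [C_sub, C_mul, C_sub, C_pow, map_ofNat]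
          have hT : C (δ ^ 2 - c * (c - 4)) * g ^ 2
              = 4 * C c * g - 12 - 2 * C δ * g * r - r ^ 2 := by
            rw [← hCD]
            linear_combination he - (C δ * g + r + e) * her
          have hTdeg4 : (C (δ ^ 2 - c * (c - 4)) * g ^ 2).natDegree = 4 := by
            rw [natDegree_C_mul (sub_ne_zero.mpr hne), natDegree_pow, hg]
          have hTdeg3 : (4 * C c * g - 12 - 2 * C δ * g * r - r ^ 2).natDegree ≤ 3 := by
            refine ndeg_sub_le (ndeg_sub_le (ndeg_sub_le ?_ ?_) ?_) ?_
            · rw [show (4 : ℚ[X]) * C c * g = C (4 * c) * g by rw [C_mul, map_ofNat]]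
              exact (natDegree_C_mul_le _ _).trans (by omega)
            · simp
            · refine (natDegree_mul_le).trans ?_
              have h1 : (2 * C δ * g).natDegree ≤ 2 := by
                rw [show (2 : ℚ[X]) * C δ * g = C (2 * δ) * g by rw [C_mul, map_ofNat]]
                exact (natDegree_C_mul_le _ _).trans hg.le
              omega
            · rw [natDegree_pow]; omega
          rw [hT] at hTdeg4
          omega
        have hδ0 : δ ≠ 0 := by
          intro h
          rw [h] at hδsq
          rcases mul_eq_zero.mp hδsq.symm with h1 | h1
          · exact hc0 h1
          · exact hc4 (by linarith)
        have hCδ2 : (C δ) ^ 2 = C c * (C c - 4) := by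
          rw [← C_pow, hδsq, C_mul, C_sub, map_ofNat]
        have hE : (2 * C δ * r - 4 * C c) * g = -12 - r ^ 2 := by
          linear_combination he - (C δ * g + r + e) * her - g ^ 2 * hCδ2
        rcases eq_or_ne (r.coeff 1) 0 with hr1 | hr1
        · have hrdeg0 : r.natDegree = 0 := by
            have h0 : r.natDegree ≤ 0 := by
              rw [natDegree_le_iff_coeff_eq_zero]
              intro N hN
              by_cases hN1 : N = 1
              · rw [hN1]; exact hr1
              · exact coeff_eq_zero_of_natDegree_lt (lt_of_le_of_lt hrdeg (by omega))
            omega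
          obtain ⟨ρ, hρ⟩ : ∃ ρ, r = C ρ := ⟨r.coeff 0, eq_C_of_natDegree_eq_zero hrdeg0⟩
          rw [hρ] at hE
          have hE' : C (2 * δ * ρ - 4 * c) * g = C (-12 - ρ ^ 2) := by
            simp only [C_sub, C_add, C_mul, C_pow, C_neg, map_ofNat]
            linear_combination hE
          rcases eq_or_ne (2 * δ * ρ - 4 * c) 0 with hz | hz
          · rw [hz, C_0, zero_mul] at hE'
            have h1 : -12 - ρ ^ 2 = 0 := C_eq_zero.mp hE'.symm
            nlinarith [sq_nonneg ρ]
          · have := congrArg natDegree hE'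
            rw [natDegree_C_mul hz, hg, natDegree_C] at this
            omega
        · have hL1 : (2 * C δ * r - 4 * C c).natDegree = 1 := by
            have hco : (2 * C δ * r - 4 * C c).coeff 1 = 2 * δ * r.coeff 1 := by
              rw [show (2 : ℚ[X]) * C δ * r = C (2 * δ) * r by rw [C_mul, map_ofNat],
                show (4 : ℚ[X]) * C c = C (4 * c) by rw [C_mul, map_ofNat],
                coeff_sub, coeff_C_mul, coeff_C]
              norm_num
            have hne : (2 * C δ * r - 4 * C c).coeff 1 ≠ 0 := by
              rw [hco]
              exact mul_ne_zero (mul_ne_zero two_ne_zero hδ0) hr1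
            have hge := le_natDegree_of_ne_zero hne
            have hle : (2 * C δ * r - 4 * C c).natDegree ≤ 1 := by
              refine ndeg_sub_le ?_ ?_
              · rw [show (2 : ℚ[X]) * C δ * r = C (2 * δ) * r by rw [C_mul, map_ofNat]]
                exact (natDegree_C_mul_le _ _).trans hrdeg
              · rw [show (4 : ℚ[X]) * C c = C (4 * c) by rw [C_mul, map_ofNat], natDegree_C]
                omega
            omega
          have hL0 : 2 * C δ * r - 4 * C c ≠ 0 := fun h => by simp [h] at hL1
          have hdegL := congrArg natDegree hE
          rw [natDegree_mul hL0 hg0, hL1, hg] at hdegL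
          have h2 : ((-12 : ℚ[X]) - r ^ 2).natDegree ≤ 2 := by
            refine ndeg_sub_le ?_ ?_
            · simp
            · rw [natDegree_pow]; omega
          omega
      rw [hc4, map_ofNat] at hq
      have hgf0 : g - f ≠ 0 := by
        intro h
        have hgf : g = f := by linear_combination h
        rw [hgf] at hq
        have h4 : (4 : ℚ[X]) * f = 4 := by linear_combination -hq
        have hf1 : f = 1 := by
          have := mul_left_cancel₀ (show (4 : ℚ[X]) ≠ 0 by norm_num)
            (show (4 : ℚ[X]) * f = 4 * 1 by rw [h4, mul_one])
          exact this
        rw [hf1] at hf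
        simp at hf
      have hrel : (g - f) ^ 2 = 2 * (f + g) - 4 := by linear_combination hq
      have hgfdeg : (g - f).natDegree ≤ 1 := by
        have h1 : ((g - f) ^ 2).natDegree ≤ 2 := by
          rw [hrel]
          refine ndeg_sub_le ?_ ?_
          · rw [show (2 : ℚ[X]) * (f + g) = C 2 * (f + g) by rw [map_ofNat]]
            exact (natDegree_C_mul_le _ _).trans hs2.le
          · simp
        rw [natDegree_pow] at h1
        omega
      have hgfdeg1 : (g - f).natDegree = 1 := by
        rcases Nat.lt_or_ge (g - f).natDegree 1 with h1 | h1
        · exfalso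
          obtain ⟨w, hw⟩ : ∃ w, g - f = C w := ⟨(g - f).coeff 0, eq_C_of_natDegree_eq_zero (by omega)⟩
          rw [hw] at hrel
          have h2 : (2 : ℚ[X]) * (f + g) = C (w ^ 2 + 4) := by
            rw [C_add, C_pow, map_ofNat]
            linear_combination -hrel
          have h3 := congrArg natDegree h2
          rw [show (2 : ℚ[X]) * (f + g) = C 2 * (f + g) by rw [map_ofNat],
            natDegree_C_mul (two_ne_zero), hs2, natDegree_C] at h3
          omega
        · omega
      have hC : (2 : ℚ[X]) * C (1 / 2 : ℚ) = 1 := by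
        rw [← map_ofNat (C : ℚ →+* ℚ[X]) 2, ← C_mul, ← C_1]
        norm_num
      refine ⟨C (1 / 2 : ℚ) * (g - f), ?_, ?_, ?_⟩
      · rw [natDegree_C_mul (by norm_num : (1 / 2 : ℚ) ≠ 0), hgfdeg1]
      · have h4 : (4 : ℚ[X]) * f
            = 4 * ((C (1 / 2 : ℚ) * (g - f)) ^ 2 - C (1 / 2 : ℚ) * (g - f) + 1) := by
          linear_combination (-1 : ℚ[X]) * hrel
            + (-((g - f) ^ 2 * (2 * C (1 / 2 : ℚ) + 1)) + 2 * (g - f)) * hC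
        exact mul_left_cancel₀ (show (4 : ℚ[X]) ≠ 0 by norm_num) (by rw [h4])
      · have h4 : (4 : ℚ[X]) * g
            = 4 * ((C (1 / 2 : ℚ) * (g - f)) ^ 2 + C (1 / 2 : ℚ) * (g - f) + 1) := by
          linear_combination (-1 : ℚ[X]) * hrel
            + (-((g - f) ^ 2 * (2 * C (1 / 2 : ℚ) + 1)) - 2 * (g - f)) * hC
        exact mul_left_cancel₀ (show (4 : ℚ[X]) ≠ 0 by norm_num) (by rw [h4])
  · rintro (h | ⟨h, hh1, hhf, hhg⟩)
    · exact ⟨6, by rw [h]; ring⟩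
    · exact ⟨2 * h ^ 2 + 10, by rw [hhf, hhg]; ring⟩
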